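/- The star graph K_{1,n} (n ≥ 2) with path metric has supremal p-negative type log₂(2n/(n−1)); in particular, at p = log₂(2n/(n−1)) the weight vector assigning 1 to the center and −1/n to each leaf gives Σ_{i,j} d(x_i,x_j)^p α_i α_j = 0 with Σ α_i = 0. -/

import Mathlib

open Matrix

theorem star_supremal_neg_type {n : ℕ} (hn : 2 ≤ n)
    (D : ℝ → Matrix (Fin (n + 1)) (Fin (n + 1)) ℝ)
    (hD : ∀ q i j, D q i j =
      if i = j then 0 else if (i : ℕ) = 0 ∨ (j : ℕ) = 0 then 1 else (2 : ℝ) ^ q)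
    (p : ℝ) (hp : p = Real.logb 2 (2 * (n : ℝ) / ((n : ℝ) - 1)))
    (α : Fin (n + 1) → ℝ)
    (hα : ∀ i, α i = if (i : ℕ) = 0 then 1 else -(1 / (n : ℝ))) :
    (∀ q : ℝ, 0 ≤ q → q ≤ p →
      ∀ β : Fin (n + 1) → ℝ, β ⬝ᵥ 1 = 0 → (D q).mulVec β ⬝ᵥ β ≤ 0) ∧
    (∀ q : ℝ, p < q →
      ¬ (∀ β : Fin (n + 1) → ℝ, β ⬝ᵥ 1 = 0 → (D q).mulVec β ⬝ᵥ β ≤ 0)) ∧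
    α ⬝ᵥ 1 = 0 ∧ (D p).mulVec α ⬝ᵥ α = 0 := by
  have hn2 : (2 : ℝ) ≤ (n : ℝ) := by exact_mod_cast hn
  have hnpos : (0 : ℝ) < n := by linarith
  have hn0 : (n : ℝ) ≠ 0 := ne_of_gt hnpos
  have hn1pos : (0 : ℝ) < (n : ℝ) - 1 := by linarith
  have hn10 : (n : ℝ) - 1 ≠ 0 := ne_of_gt hn1pos
  -- key quadratic form computation
  have key : ∀ q : ℝ, ∀ β : Fin (n + 1) → ℝ,
      (D q).mulVec β ⬝ᵥ β =
        2 * β 0 * (∑ i : Fin n, β i.succ)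
          + (2:ℝ)^q * (∑ i : Fin n, β i.succ)^2
          - (2:ℝ)^q * ∑ i : Fin n, (β i.succ)^2 := by
    intro q β
    set t := (2:ℝ)^q with ht
    set S := ∑ j : Fin n, β j.succ with hSdef
    have hrow : ∀ i : Fin n, ∑ j : Fin n, D q i.succ j.succ * β j.succ
        = t * S - t * β i.succ := by
      intro i
      have e : ∀ j : Fin n, D q i.succ j.succ * β j.succ
          = t * β j.succ - (if i = j then t * β j.succ else 0) := by
        intro j
        rw [hD]
        rcases eq_or_ne i j with h | h
        · subst h; simp
        · simp [h, Fin.succ_ne_zero, Fin.val_succ, Fin.succ_inj.ne.mpr h, ht]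
      rw [Finset.sum_congr rfl fun j _ => e j, Finset.sum_sub_distrib,
        Finset.sum_ite_eq _ i, ← Finset.mul_sum]
      simp [hSdef]
    have h00 : D q 0 0 = 0 := by rw [hD]; simp
    have h0j : ∀ j : Fin n, D q 0 j.succ = 1 := by
      intro j; rw [hD]; simp [(Fin.succ_ne_zero j).symm]
    have hi0 : ∀ i : Fin n, D q i.succ 0 = 1 := by
      intro i; rw [hD]; simp [Fin.succ_ne_zero i]
    simp only [dotProduct, mulVec, Fin.sum_univ_succ]
    have e1 : ∑ j : Fin n, D q 0 j.succ * β j.succ = S :=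
      Finset.sum_congr rfl fun j _ => by rw [h0j, one_mul]
    have e2 : ∀ i : Fin n,
        (D q i.succ 0 * β 0 + ∑ j : Fin n, D q i.succ j.succ * β j.succ) * β i.succ
        = β 0 * β i.succ + t * S * β i.succ - t * (β i.succ)^2 := by
      intro i; rw [hi0, hrow, one_mul]; ring
    rw [h00, e1, Finset.sum_congr rfl fun i _ => e2 i, Finset.sum_sub_distrib,
      Finset.sum_add_distrib, ← Finset.mul_sum, ← Finset.mul_sum, ← Finset.mul_sum, ← hSdef]
    ring
  have hbase : (0:ℝ) < 2 * (n:ℝ) / ((n:ℝ) - 1) := by positivity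
  have h2p : (2:ℝ)^p = 2 * (n:ℝ) / ((n:ℝ) - 1) := by
    rw [hp, Real.rpow_logb (by norm_num) (by norm_num) hbase]
  have hα0 : α 0 = 1 := by rw [hα]; simp
  have hαs : ∀ i : Fin n, α i.succ = -(1 / (n:ℝ)) := by
    intro i; rw [hα]; simp [Fin.val_succ]
  have hsα : α ⬝ᵥ 1 = 0 := by
    simp only [dotProduct, Pi.one_apply, mul_one, Fin.sum_univ_succ, hα0, hαs,
      Finset.sum_const, Finset.card_univ, Fintype.card_fin, nsmul_eq_mul]
    field_simp; norm_num
  have hQα : ∀ q : ℝ, (D q).mulVec α ⬝ᵥ α = -2 + (2:ℝ)^q * (1 - 1/(n:ℝ)) := by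
    intro q
    rw [key q α]
    simp only [hα0, hαs, Finset.sum_const, Finset.card_univ, Fintype.card_fin, nsmul_eq_mul]
    have hq1 : (n:ℝ) * -(1/(n:ℝ)) = -1 := by field_simp
    have hq2 : (n:ℝ) * (-(1/(n:ℝ)))^2 = 1/(n:ℝ) := by field_simp
    rw [hq1, hq2]; ring
  refine ⟨?_, ?_, hsα, ?_⟩
  · intro q hq0 hqp β hβ
    have hsum : β 0 + ∑ i : Fin n, β i.succ = 0 := by
      simpa [dotProduct, Fin.sum_univ_succ] using hβ
    have hS : (∑ i : Fin n, β i.succ) = -β 0 := by linarith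
    have ht : (2:ℝ)^q ≤ 2 * (n:ℝ) / ((n:ℝ) - 1) := by
      rw [← h2p]
      exact Real.rpow_le_rpow_of_exponent_le (by norm_num) hqp
    have ht0 : (0:ℝ) < (2:ℝ)^q := Real.rpow_pos_of_pos (by norm_num) q
    have hcs : (β 0)^2 ≤ (n:ℝ) * ∑ i : Fin n, (β i.succ)^2 := by
      have h := sq_sum_le_card_mul_sum_sq (s := (Finset.univ : Finset (Fin n)))
        (f := fun i => β i.succ)
      rw [hS] at h
      simpa using h
    rw [key q β, hS]
    have htn : (2:ℝ)^q * ((n:ℝ) - 1) ≤ 2 * (n:ℝ) := by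
      rw [le_div_iff₀ hn1pos] at ht; linarith
    nlinarith [sq_nonneg (β 0), mul_le_mul_of_nonneg_left hcs ht0.le]
  · intro q hpq hneg
    have h := hneg α hsα
    rw [hQα q] at h
    have ht : 2 * (n:ℝ) / ((n:ℝ) - 1) < (2:ℝ)^q := by
      rw [← h2p]
      exact Real.rpow_lt_rpow_of_exponent_lt (by norm_num) hpq
    rw [div_lt_iff₀ hn1pos] at ht
    have hinv : (1/(n:ℝ)) * (n:ℝ) = 1 := by field_simp
    nlinarith [mul_le_mul_of_nonneg_right h hnpos.le]
  · rw [hQα p, h2p]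
    field_simp; norm_num
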